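/- Let G be a finite connected, non-complete strongly regular graph with parameters (v, k, a1, c2), set b1 = k − a1 − 1, and let θ1 be the second-largest eigenvalue of its adjacency matrix. If max(b1/(k+1), c2/k) ≤ (k − θ1)/k, then h_G ≤ (k − θ1)/k. -/

import Mathlib

open Finset Matrix

/-- `E[S,T]`: the number of ordered pairs `(x, y)` with `x ∈ S`, `y ∈ T` and `x, y` adjacent. -/
def eB {V : Type} [Fintype V] [DecidableEq V] (G : SimpleGraph V) [DecidableRel G.Adj]
    (S T : Finset V) : ℕ :=
  ((S ×ˢ T).filter fun p => G.Adj p.1 p.2).card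


lemma eB_eq_sum {V : Type} [Fintype V] [DecidableEq V] (G : SimpleGraph V) [DecidableRel G.Adj]
    (S T : Finset V) : eB G S T = ∑ y ∈ S, (T.filter fun z => G.Adj y z).card := by
  unfold eB
  rw [Finset.card_filter, Finset.sum_product]
  simp only [Finset.card_filter]

lemma eB_comm {V : Type} [Fintype V] [DecidableEq V] (G : SimpleGraph V) [DecidableRel G.Adj]
    (S T : Finset V) : eB G S T = eB G T S := by
  unfold eB
  apply Finset.card_nbij' (fun p => p.swap) (fun p => p.swap) <;>
    simp +contextual [Set.MapsTo, Set.LeftInvOn, Set.RightInvOn, Finset.mem_filter, Finset.mem_product, G.adj_comm, and_comm]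

lemma eB_closed {V : Type} [Fintype V] [DecidableEq V] (G : SimpleGraph V) [DecidableRel G.Adj]
    {v k a1 c2 : ℕ} (hsrg : G.IsSRGWith v k a1 c2) (x : V) :
    eB G (insert x (G.neighborFinset x)) (insert x (G.neighborFinset x))ᶜ = k * (k - a1 - 1) := by
  set S := insert x (G.neighborFinset x) with hS
  have hxnot : x ∉ G.neighborFinset x := by simp
  rw [eB_eq_sum, Finset.sum_insert hxnot]
  have h0 : ((Sᶜ).filter fun z => G.Adj x z).card = 0 := by
    rw [Finset.card_eq_zero, Finset.filter_eq_empty_iff]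
    intro z hz
    simp only [hS, Finset.mem_compl, Finset.mem_insert, SimpleGraph.mem_neighborFinset] at hz
    push_neg at hz
    exact hz.2
  rw [h0, zero_add]
  have hy : ∀ y ∈ G.neighborFinset x, ((Sᶜ).filter fun z => G.Adj y z).card = k - a1 - 1 := by
    intro y hymem
    rw [SimpleGraph.mem_neighborFinset] at hymem
    have h1 : (Sᶜ).filter (fun z => G.Adj y z) = G.neighborFinset y \ S := by
      ext z
      simp [Finset.mem_sdiff, Finset.mem_filter, Finset.mem_compl, and_comm]
    have h2 : G.neighborFinset y ∩ S = insert x (G.neighborFinset y ∩ G.neighborFinset x) := by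
      rw [hS, Finset.inter_comm, Finset.insert_inter_of_mem
        (by rw [SimpleGraph.mem_neighborFinset]; exact hymem.symm), Finset.inter_comm]
    have h3 : (G.neighborFinset y ∩ G.neighborFinset x).card = a1 := by
      simp_rw [SimpleGraph.neighborFinset_def, ← Set.toFinset_inter,
        ← hsrg.of_adj y x hymem.symm, ← Set.toFinset_card]
      congr!
    have h4 : (G.neighborFinset y ∩ S).card = a1 + 1 := by
      rw [h2, Finset.card_insert_of_notMem (by simp), h3]
    have h5 : (G.neighborFinset y).card = k := by
      rw [SimpleGraph.card_neighborFinset_eq_degree]; exact hsrg.regular y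
    have h6 := Finset.card_sdiff_add_card_inter (G.neighborFinset y) S
    rw [h1]
    omega
  rw [Finset.sum_congr rfl hy, Finset.sum_const,
    SimpleGraph.card_neighborFinset_eq_degree, hsrg.regular x, smul_eq_mul]

/-- The Cheeger constant of a `k`-regular graph `G`: the infimum of
`E[S,Sᶜ] / (k·|S|)` over nonempty vertex subsets `S` with `2·|S| ≤ |V|`. -/
noncomputable def cheeger {V : Type} [Fintype V] [DecidableEq V] (G : SimpleGraph V)
    [DecidableRel G.Adj] (k : ℕ) : ℝ :=
  sInf {x : ℝ | ∃ S : Finset V, S.Nonempty ∧ 2 * S.card ≤ Fintype.card V ∧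
    x = (eB G S Sᶜ : ℝ) / (k * S.card)}

/-- `θ` is an eigenvalue of the adjacency matrix of `G`. -/
def IsAdjEigenvalue {V : Type} [Fintype V] [DecidableEq V] (G : SimpleGraph V)
    [DecidableRel G.Adj] (θ : ℝ) : Prop :=
  ∃ f : V → ℝ, f ≠ 0 ∧ G.adjMatrix ℝ *ᵥ f = θ • f

/-- `θ` is the second-largest adjacency eigenvalue of the connected `k`-regular graph `G`,
i.e. the largest eigenvalue distinct from the top eigenvalue `k`
(which has multiplicity one for connected graphs). -/
def IsSecondLargestAdjEigenvalue {V : Type} [Fintype V] [DecidableEq V] (G : SimpleGraph V)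
    [DecidableRel G.Adj] (k : ℕ) (θ : ℝ) : Prop :=
  IsAdjEigenvalue G θ ∧ θ ≠ (k : ℝ) ∧ ∀ μ : ℝ, IsAdjEigenvalue G μ → μ ≠ (k : ℝ) → μ ≤ θ

/-- If a finite connected non-complete strongly regular graph with parameters `(v, k, a1, c2)`
and second-largest adjacency eigenvalue `θ1` satisfies
`max (b1/(k+1)) (c2/k) ≤ (k - θ1)/k` with `b1 = k - a1 - 1`, then `h_G ≤ (k - θ1)/k`. -/
theorem stmt_7 {V : Type} [Fintype V] [DecidableEq V] (G : SimpleGraph V) [DecidableRel G.Adj]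
    (v k a1 c2 : ℕ) (hsrg : G.IsSRGWith v k a1 c2)
    (hconn : G.Connected) (hnc : G ≠ ⊤)
    (θ1 : ℝ) (hθ1 : IsSecondLargestAdjEigenvalue G k θ1)
    (hmax : max (((k : ℝ) - (a1 : ℝ) - 1) / ((k : ℝ) + 1)) ((c2 : ℝ) / (k : ℝ)) ≤
      ((k : ℝ) - θ1) / (k : ℝ)) :
    cheeger G k ≤ ((k : ℝ) - θ1) / (k : ℝ) := by
  classical
  -- a nonadjacent pair
  obtain ⟨x, z, hxz, hnadj⟩ : ∃ x z : V, x ≠ z ∧ ¬ G.Adj x z := by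
    by_contra h
    push_neg at h
    apply hnc
    ext a b
    simp only [SimpleGraph.top_adj]
    exact ⟨fun h' => h'.ne, h a b⟩
  -- x has a neighbor
  obtain ⟨y0, hy0⟩ : ∃ y0, G.Adj x y0 := by
    obtain ⟨w⟩ := hconn.preconnected x z
    cases w with
    | nil => exact absurd rfl hxz
    | cons h _ => exact ⟨_, h⟩
  have hk : 0 < k := by
    have := hsrg.regular x
    have hd := G.degree_pos_iff_exists_adj x
    rw [this] at hd
    exact hd.mpr ⟨y0, hy0⟩
  have ha1k : a1 + 1 ≤ k := by
    have h1 := hy0.card_commonNeighbors_lt_degree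
    rw [hsrg.regular x, hsrg.of_adj x y0 hy0] at h1
    omega
  set S := insert x (G.neighborFinset x) with hS
  have hxnot : x ∉ G.neighborFinset x := by simp
  have hcardS : S.card = k + 1 := by
    rw [hS, Finset.card_insert_of_notMem hxnot,
      SimpleGraph.card_neighborFinset_eq_degree, hsrg.regular x]
  have hE : eB G S Sᶜ = k * (k - a1 - 1) := eB_closed G hsrg x
  have hzS : z ∉ S := by
    simp only [hS, Finset.mem_insert, SimpleGraph.mem_neighborFinset]
    push_neg
    exact ⟨fun h => hxz h.symm, hnadj⟩
  have hSle : k + 1 ≤ Fintype.card V := hcardS ▸ S.card_le_univ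
  have hbdd : BddBelow {x : ℝ | ∃ S : Finset V, S.Nonempty ∧ 2 * S.card ≤ Fintype.card V ∧
      x = (eB G S Sᶜ : ℝ) / (k * S.card)} := by
    refine ⟨0, fun r hr => ?_⟩
    obtain ⟨T, _, _, rfl⟩ := hr
    positivity
  have hkR : (k : ℝ) ≠ 0 := Nat.cast_ne_zero.mpr hk.ne'
  by_cases hvc : 2 * (k + 1) ≤ Fintype.card V
  · have hmem : ((eB G S Sᶜ : ℝ) / (k * S.card)) ∈ {x : ℝ | ∃ S : Finset V, S.Nonempty ∧
        2 * S.card ≤ Fintype.card V ∧ x = (eB G S Sᶜ : ℝ) / (k * S.card)} :=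
      ⟨S, ⟨x, Finset.mem_insert_self _ _⟩, by rw [hcardS]; exact hvc, rfl⟩
    refine le_trans (csInf_le hbdd hmem) ?_
    rw [hE, hcardS]
    have hcast : ((k * (k - a1 - 1) : ℕ) : ℝ) = (k : ℝ) * ((k : ℝ) - (a1 : ℝ) - 1) := by
      have : k - a1 - 1 = k - (a1 + 1) := by omega
      rw [this, Nat.cast_mul, Nat.cast_sub ha1k]
      push_cast
      ring
    rw [hcast]
    have : (k : ℝ) * ((k : ℝ) - (a1 : ℝ) - 1) / ((k : ℝ) * ((k : ℝ) + 1)) =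
        ((k : ℝ) - (a1 : ℝ) - 1) / ((k : ℝ) + 1) := by
      rw [mul_div_mul_left _ _ hkR]
    rw [show ((k + 1 : ℕ) : ℝ) = (k : ℝ) + 1 by push_cast; ring, this]
    exact le_trans (le_max_left _ _) hmax
  · -- use the complement
    have hcardSc : Sᶜ.card = v - k - 1 := by
      rw [Finset.card_compl, hcardS, hsrg.card]
      omega
    have hm : 0 < v - k - 1 := by
      have : z ∈ Sᶜ := Finset.mem_compl.mpr hzS
      have := Finset.card_pos.mpr ⟨z, this⟩
      omega
    have hEc : eB G Sᶜ Sᶜᶜ = (v - k - 1) * c2 := by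
      rw [compl_compl, eB_comm, hE]
      exact SimpleGraph.IsSRGWith.param_eq G hsrg (by rw [← hsrg.card]; exact Fintype.card_pos_iff.mpr ⟨x⟩)
    have h2c : 2 * Sᶜ.card ≤ Fintype.card V := by
      rw [hcardSc, ← hsrg.card] at *
      omega
    have hmem : ((eB G Sᶜ Sᶜᶜ : ℝ) / (k * Sᶜ.card)) ∈ {x : ℝ | ∃ S : Finset V, S.Nonempty ∧
        2 * S.card ≤ Fintype.card V ∧ x = (eB G S Sᶜ : ℝ) / (k * S.card)} :=
      ⟨Sᶜ, ⟨z, Finset.mem_compl.mpr hzS⟩, h2c, rfl⟩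
    refine le_trans (csInf_le hbdd hmem) ?_
    rw [hEc, hcardSc]
    have hmR : ((v - k - 1 : ℕ) : ℝ) ≠ 0 := Nat.cast_ne_zero.mpr hm.ne'
    have : (((v - k - 1) * c2 : ℕ) : ℝ) / ((k : ℝ) * ((v - k - 1 : ℕ) : ℝ)) =
        (c2 : ℝ) / (k : ℝ) := by
      rw [Nat.cast_mul, mul_comm ((v - k - 1 : ℕ) : ℝ) (c2 : ℝ), mul_comm ((k : ℝ)) _,
        mul_comm ((v - k - 1 : ℕ) : ℝ) (k : ℝ), mul_div_mul_right _ _ hmR]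
    rw [this]
    exact le_trans (le_max_right _ _) hmax
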